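/- Let K be a field of characteristic zero, V a finite-dimensional K-vector space, and n a natural number with dim_K V ≥ n. Then the K-vector space of endomorphisms f of V^{⊗n} such that f ∘ g^{⊗n} = g^{⊗n} ∘ f for every invertible K-linear map g : V → V has dimension n!. -/

import Mathlib

open scoped TensorProduct

/-- The endomorphism `L_σ^{(n)}` of the `n`-th tensor power of `V`, determined by
`v_1 ⊗ ⋯ ⊗ v_n ↦ v_{σ⁻¹(1)} ⊗ ⋯ ⊗ v_{σ⁻¹(n)}`. -/
noncomputable def permMap (K : Type*) [Field K] (V : Type*) [AddCommGroup V] [Module K V]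
    (n : ℕ) (σ : Equiv.Perm (Fin n)) :
    (⨂[K] _ : Fin n, V) →ₗ[K] ⨂[K] _ : Fin n, V :=
  (PiTensorProduct.reindex K (fun _ : Fin n => V) σ).toLinearMap

/-- The endomorphism `T^{⊗n}` of the `n`-th tensor power of `V` induced by `T : V →ₗ[K] V`. -/
noncomputable def tpowMap (K : Type*) [Field K] (V : Type*) [AddCommGroup V] [Module K V]
    (n : ℕ) (T : V →ₗ[K] V) :
    (⨂[K] _ : Fin n, V) →ₗ[K] ⨂[K] _ : Fin n, V :=
  PiTensorProduct.map fun _ => T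

/-- The commutant of the diagonal `GL(V)`-action on `V^{⊗n}`: the space of endomorphisms
`f` of `V^{⊗n}` such that `f ∘ g^{⊗n} = g^{⊗n} ∘ f` for every invertible `g : V → V`. -/
noncomputable def glCommutant (K : Type*) [Field K] (V : Type*) [AddCommGroup V] [Module K V]
    (n : ℕ) : Submodule K (Module.End K (⨂[K] _ : Fin n, V)) where
  carrier := {f | ∀ g : V ≃ₗ[K] V,
    f ∘ₗ tpowMap K V n g.toLinearMap = tpowMap K V n g.toLinearMap ∘ₗ f}
  add_mem' := by
    intro a b ha hb g
    simp only [LinearMap.add_comp, LinearMap.comp_add, ha g, hb g]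
  zero_mem' := by
    intro g
    simp
  smul_mem' := by
    intro c a ha g
    simp only [LinearMap.smul_comp, LinearMap.comp_smul, ha g]

section SW

variable {K : Type*} [Field K] {V : Type*} [AddCommGroup V] [Module K V]
variable {n d : ℕ} (b : Module.Basis (Fin d) K V)

/-- basis-vector pure tensors -/
noncomputable def ee (J : Fin n → Fin d) : ⨂[K] _ : Fin n, V :=
  PiTensorProduct.tprod K fun k => b (J k)

/-- the coordinate functional -/
noncomputable def ff (J : Fin n → Fin d) : (⨂[K] _ : Fin n, V) →ₗ[K] K :=
  PiTensorProduct.lift <|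
    (MultilinearMap.mkPiAlgebra K (Fin n) K).compLinearMap fun k => b.coord (J k)

@[simp] lemma ff_tprod (J : Fin n → Fin d) (w : Fin n → V) :
    ff b J (PiTensorProduct.tprod K w) = ∏ k, b.coord (J k) (w k) := by
  simp [ff]

lemma ff_ee (J J' : Fin n → Fin d) :
    ff b J (ee b J') = if J' = J then 1 else 0 := by
  rw [ee, ff_tprod]
  by_cases h : J' = J
  · subst h; simp
  · rw [if_neg h]
    obtain ⟨k, hk⟩ := Function.ne_iff.mp h
    refine Finset.prod_eq_zero (Finset.mem_univ k) ?_
    simp [Module.Basis.coord_apply, Module.Basis.repr_self, Finsupp.single_eq_of_ne hk.symm]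

lemma tprod_expansion (w : Fin n → V) :
    PiTensorProduct.tprod K w = ∑ J : Fin n → Fin d, (∏ k, b.repr (w k) (J k)) • ee b J := by
  have h1 : PiTensorProduct.tprod K w
      = PiTensorProduct.tprod K (fun k => ∑ i : Fin d, b.repr (w k) i • b i) := by
    congr 1; funext k; rw [Module.Basis.sum_repr b (w k)]
  rw [h1, MultilinearMap.map_sum]
  refine Finset.sum_congr rfl fun J _ => ?_
  rw [show (fun k => b.repr (w k) (J k) • b (J k))
      = fun k => (fun k => b.repr (w k) (J k)) k • (fun k => b (J k)) k from rfl,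
    MultilinearMap.map_smul_univ]
  rfl

/-- expansion of any tensor in the `ee` family -/
lemma ee_expansion (x : ⨂[K] _ : Fin n, V) :
    x = ∑ J : Fin n → Fin d, ff b J x • ee b J := by
  have : (LinearMap.id : (⨂[K] _ : Fin n, V) →ₗ[K] _) =
      ∑ J : Fin n → Fin d, (ff b J).smulRight (ee b J) := by
    ext w
    simp only [LinearMap.compMultilinearMap_apply, LinearMap.id_apply, LinearMap.coe_sum,
      Finset.sum_apply, LinearMap.smulRight_apply, ff_tprod]
    rw [tprod_expansion b w]
    refine Finset.sum_congr rfl fun J _ => ?_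
    simp [Module.Basis.coord_apply]
  conv_lhs => rw [← LinearMap.id_apply (R := K) x, this]
  simp

lemma span_ee : Submodule.span K (Set.range (ee (n := n) b)) = ⊤ := by
  rw [Submodule.eq_top_iff']
  intro x
  rw [ee_expansion b x]
  exact Submodule.sum_mem _ fun J _ =>
    Submodule.smul_mem _ _ (Submodule.subset_span (Set.mem_range_self J))

/-- the diagonal automorphism sending `b i` to `t i • b i` -/
noncomputable def gdiag (t : Fin d → Kˣ) : V ≃ₗ[K] V :=
  LinearEquiv.ofLinear
    (b.constr K fun i => (t i : K) • b i)
    (b.constr K fun i => ((t i : K)⁻¹) • b i)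
    (by refine b.ext fun i => ?_
        simp only [LinearMap.comp_apply, Module.Basis.constr_basis, map_smul, LinearMap.id_apply,
          smul_smul]
        rw [inv_mul_cancel₀ (Units.ne_zero (t i)), one_smul])
    (by refine b.ext fun i => ?_
        simp only [LinearMap.comp_apply, Module.Basis.constr_basis, map_smul, LinearMap.id_apply,
          smul_smul]
        rw [mul_inv_cancel₀ (Units.ne_zero (t i)), one_smul])

@[simp] lemma gdiag_basis (t : Fin d → Kˣ) (i : Fin d) :
    gdiag b t (b i) = (t i : K) • b i := by
  simp [gdiag, Module.Basis.constr_basis]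

lemma coord_gdiag (t : Fin d → Kˣ) (i : Fin d) (v : V) :
    b.coord i (gdiag b t v) = (t i : K) * b.coord i v := by
  have : (b.coord i) ∘ₗ (gdiag b t).toLinearMap = (t i : K) • b.coord i := by
    refine b.ext fun j => ?_
    simp only [LinearMap.comp_apply, LinearEquiv.coe_coe, gdiag_basis, map_smul,
      LinearMap.smul_apply, Module.Basis.coord_apply, Module.Basis.repr_self, smul_eq_mul]
    rcases eq_or_ne j i with rfl | h
    · simp
    · simp [Finsupp.single_eq_of_ne h.symm]
  simpa using DFunLike.congr_fun this v

lemma ff_tpow_gdiag (J : Fin n → Fin d) (t : Fin d → Kˣ) (x : ⨂[K] _ : Fin n, V) :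
    ff b J (tpowMap K V n (gdiag b t).toLinearMap x)
      = (∏ k, (t (J k) : K)) * ff b J x := by
  induction x using PiTensorProduct.induction_on with
  | smul_tprod r w =>
    simp only [map_smul, tpowMap, PiTensorProduct.map_tprod, ff_tprod, smul_eq_mul]
    rw [show (∏ k, b.coord (J k) ((gdiag b t).toLinearMap (w k)))
        = ∏ k, ((t (J k) : K) * b.coord (J k) (w k)) from
      Finset.prod_congr rfl fun k _ => coord_gdiag b t (J k) (w k), Finset.prod_mul_distrib]
    ring
  | add x y hx hy =>
    simp only [map_add, hx, hy]; ring

section Weight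

variable (hn : n ≤ d)

/-- number of times `J` hits `i` -/
def cnt (J : Fin n → Fin d) (i : Fin d) : ℕ :=
  (Finset.univ.filter fun k => J k = i).card

lemma prod_ite_two [CharZero K] (J : Fin n → Fin d) (i : Fin d) :
    (∏ k, (((if J k = i then (Units.mk0 (2:K) two_ne_zero) else 1) : Kˣ) : K))
      = (2 : K) ^ cnt J i := by
  rw [cnt, ← Finset.prod_filter_mul_prod_filter_not Finset.univ (fun k => J k = i)]
  have h1 : ∀ k ∈ Finset.univ.filter fun k => J k = i,
      (((if J k = i then (Units.mk0 (2:K) two_ne_zero) else 1) : Kˣ) : K) = 2 := by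
    intro k hk; rw [Finset.mem_filter] at hk; simp [hk.2]
  have h2 : ∀ k ∈ Finset.univ.filter fun k => ¬ J k = i,
      (((if J k = i then (Units.mk0 (2:K) two_ne_zero) else 1) : Kˣ) : K) = 1 := by
    intro k hk; rw [Finset.mem_filter] at hk; simp [hk.2]
  rw [Finset.prod_congr rfl h1, Finset.prod_congr rfl h2, Finset.prod_const,
    Finset.prod_const_one, mul_one]

lemma cnt_eq_of_prod_eq [CharZero K] {J J' : Fin n → Fin d}
    (h : ∀ t : Fin d → Kˣ, (∏ k, (t (J k) : K)) = ∏ k, (t (J' k) : K)) :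
    ∀ i, cnt J i = cnt J' i := by
  intro i
  have := h (fun j => if j = i then (Units.mk0 (2:K) two_ne_zero) else 1)
  rw [prod_ite_two, prod_ite_two] at this
  have h2 : ((2:ℕ):K) ^ cnt J i = ((2:ℕ):K) ^ cnt J' i := by push_cast; exact this
  rw [← Nat.cast_pow, ← Nat.cast_pow, Nat.cast_inj] at h2
  exact Nat.pow_right_injective le_rfl h2

lemma cnt_emb (m : Fin n) : cnt (fun k => Fin.castLE hn k) (Fin.castLE hn m) = 1 := by
  rw [cnt]
  have : (Finset.univ.filter fun k : Fin n => Fin.castLE hn k = Fin.castLE hn m) = {m} := by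
    ext k
    simp [Fin.castLE_injective hn |>.eq_iff]
  rw [this, Finset.card_singleton]

lemma exists_perm_of_cnt_eq {J : Fin n → Fin d}
    (h : ∀ i, cnt J i = cnt (fun k => Fin.castLE hn k) i) :
    ∃ σ : Equiv.Perm (Fin n), J = fun k => Fin.castLE hn (σ k) := by
  have hJlt : ∀ k, (J k : ℕ) < n := by
    intro k
    by_contra hk
    have h0 : cnt (fun k => Fin.castLE hn k) (J k) = 0 := by
      rw [cnt, Finset.card_eq_zero, Finset.filter_eq_empty_iff]
      intro m _
      intro hm
      apply hk
      rw [← hm]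
      exact m.2
    have h1 : 0 < cnt J (J k) := by
      rw [cnt, Finset.card_pos]
      exact ⟨k, by simp⟩
    have h2 := h (J k)
    omega
  have hcnt1 : ∀ k, cnt J (J k) = 1 := by
    intro k
    rw [h (J k)]
    have : J k = Fin.castLE hn ⟨(J k : ℕ), hJlt k⟩ := by
      apply Fin.ext; rfl
    rw [this]
    exact cnt_emb hn _
  have hinj : Function.Injective J := by
    intro k k' hkk
    have h1 := hcnt1 k
    rw [cnt, Finset.card_eq_one] at h1
    obtain ⟨a, ha⟩ := h1
    have hk : k ∈ Finset.univ.filter fun k' => J k' = J k := by simp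
    have hk' : k' ∈ Finset.univ.filter fun k'' => J k'' = J k := by simp [hkk]
    rw [ha, Finset.mem_singleton] at hk hk'
    rw [hk, hk']
  set σf : Fin n → Fin n := fun k => ⟨(J k : ℕ), hJlt k⟩ with hσf
  have hσinj : Function.Injective σf := by
    intro k k' hkk
    simp only [hσf, Fin.mk.injEq] at hkk
    exact hinj (Fin.ext hkk)
  refine ⟨Equiv.ofBijective σf (Finite.injective_iff_bijective.mp hσinj), ?_⟩
  funext k
  apply Fin.ext
  rfl

end Weight

lemma tpow_gdiag_ee (t : Fin d → Kˣ) (J : Fin n → Fin d) :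
    tpowMap K V n (gdiag b t).toLinearMap (ee b J)
      = (∏ k, (t (J k) : K)) • ee b J := by
  rw [tpowMap, ee, PiTensorProduct.map_tprod]
  have : (fun k => (gdiag b t).toLinearMap (b (J k)))
      = fun k => (fun k => (t (J k) : K)) k • (fun k => b (J k)) k := by
    funext k; simp
  rw [this, MultilinearMap.map_smul_univ]

lemma commutant_apply_e0_mem_span [CharZero K] (hn : n ≤ d)
    {f : Module.End K (⨂[K] _ : Fin n, V)} (hf : f ∈ glCommutant K V n) :
    f (ee b fun k => Fin.castLE hn k) ∈
      Submodule.span K (Set.range fun σ : Equiv.Perm (Fin n) =>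
        ee b fun k => Fin.castLE hn (σ k)) := by
  set e0 := ee b fun k => Fin.castLE hn k with he0
  set x := f e0 with hx
  have key : ∀ J : Fin n → Fin d, ff b J x ≠ 0 →
      ∃ σ : Equiv.Perm (Fin n), J = fun k => Fin.castLE hn (σ k) := by
    intro J hJ
    have hprod : ∀ t : Fin d → Kˣ,
        (∏ k, (t (J k) : K)) = ∏ k, (t (Fin.castLE hn k) : K) := by
      intro t
      have hcomm := DFunLike.congr_fun (hf (gdiag b t)) e0
      simp only [LinearMap.comp_apply] at hcomm
      -- hcomm : f (tpow e0) = tpow (f e0)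
      have hL : f (tpowMap K V n (gdiag b t).toLinearMap e0)
          = (∏ k, (t (Fin.castLE hn k) : K)) • x := by
        rw [he0, tpow_gdiag_ee, map_smul]
      have hR : ff b J (tpowMap K V n (gdiag b t).toLinearMap x)
          = (∏ k, (t (J k) : K)) * ff b J x := ff_tpow_gdiag b J t x
      have := congrArg (ff b J) hcomm
      rw [hL, map_smul, smul_eq_mul] at this
      rw [hR] at this
      exact mul_right_cancel₀ hJ (this.symm)
    exact exists_perm_of_cnt_eq hn (cnt_eq_of_prod_eq hprod)
  rw [ee_expansion b x]
  refine Submodule.sum_mem _ fun J _ => ?_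
  by_cases hJ : ff b J x = 0
  · rw [hJ, zero_smul]; exact Submodule.zero_mem _
  · obtain ⟨σ, rfl⟩ := key J hJ
    exact Submodule.smul_mem _ _ (Submodule.subset_span ⟨σ, rfl⟩)

section Inj

lemma finite_bad [FiniteDimensional K V] (A : V →ₗ[K] V) :
    {c : K | ¬ Function.Bijective (LinearMap.id + c • A : V →ₗ[K] V)}.Finite := by
  have hsub : {c : K | ¬ Function.Bijective (LinearMap.id + c • A : V →ₗ[K] V)} ⊆
      (fun μ : K => -μ⁻¹) '' {μ | Module.End.HasEigenvalue A μ} := by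
    intro c hc
    have hc0 : c ≠ 0 := by
      rintro rfl
      exact hc (by simpa using Function.bijective_id)
    have hninj : ¬ Function.Injective (LinearMap.id + c • A : V →ₗ[K] V) := by
      intro hinj
      exact hc ⟨hinj, (LinearMap.injective_iff_surjective).mp hinj⟩
    obtain ⟨v, hv, hv0⟩ : ∃ v, (LinearMap.id + c • A : V →ₗ[K] V) v = 0 ∧ v ≠ 0 := by
      rw [← LinearMap.ker_eq_bot] at hninj
      obtain ⟨v, hv, hv0⟩ := Submodule.exists_mem_ne_zero_of_ne_bot hninj
      exact ⟨v, LinearMap.mem_ker.mp hv, hv0⟩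
    have hev : A v = (-c⁻¹) • v := by
      simp only [LinearMap.add_apply, LinearMap.id_apply, LinearMap.smul_apply] at hv
      have h2 : c • A v = -v := by linear_combination (norm := module) hv
      have h3 : A v = c⁻¹ • (c • A v) := (inv_smul_smul₀ hc0 (A v)).symm
      rw [h3, h2]
      module
    refine ⟨-c⁻¹, ?_, by show -(-c⁻¹)⁻¹ = c; rw [inv_neg, neg_neg, inv_inv]⟩
    exact Module.End.hasEigenvalue_of_hasEigenvector
      ⟨Module.End.mem_eigenspace_iff.mpr hev, hv0⟩
  exact Set.Finite.subset (Set.Finite.image _ (Module.End.finite_hasEigenvalue A)) hsub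

lemma alt_sum_subset (s : Finset (Fin n)) :
    (∑ ε : Finset (Fin n), if s ⊆ ε then ((-1 : K)) ^ (n - ε.card) else 0)
      = if s = Finset.univ then 1 else 0 := by
  rw [Fintype.sum_equiv (⟨compl, compl, compl_compl, compl_compl⟩ : Equiv _ _)
      _ (fun ε => if ε ⊆ sᶜ then ((-1 : K)) ^ ε.card else 0)
      (by
        intro ε
        simp only [Equiv.coe_fn_mk]
        have h1 : (εᶜ : Finset (Fin n)).card = n - ε.card := by
          rw [Finset.card_compl, Fintype.card_fin]
        rw [h1]
        exact if_congr (Finset.compl_subset_compl.symm) rfl rfl)]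
  have hps : Finset.univ.filter (fun ε : Finset (Fin n) => ε ⊆ sᶜ) = sᶜ.powerset := by
    ext ε; simp [Finset.mem_powerset]
  rw [← Finset.sum_filter, hps]
  have : (∑ m ∈ sᶜ.powerset, ((-1 : K)) ^ m.card)
      = (((∑ m ∈ sᶜ.powerset, ((-1 : ℤ)) ^ m.card) : ℤ) : K) := by
    norm_cast
  rw [this, Finset.sum_powerset_neg_one_pow_card]
  have hiff : sᶜ = (∅ : Finset (Fin n)) ↔ s = Finset.univ := by
    constructor
    · intro h; rw [← compl_compl s, h, Finset.compl_empty]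
    · intro h; rw [h, Finset.compl_univ]
  by_cases h : s = Finset.univ
  · rw [if_pos h, if_pos (hiff.mpr h)]; norm_num
  · rw [if_neg h, if_neg (fun hh => h (hiff.mp hh))]; norm_num

end Inj

lemma commutant_eq_zero_of_e0 [CharZero K] [FiniteDimensional K V] (hn : n ≤ d)
    {f : Module.End K (⨂[K] _ : Fin n, V)} (hf : f ∈ glCommutant K V n)
    (h0 : f (ee b fun k => Fin.castLE hn k) = 0) : f = 0 := by
  suffices hw : ∀ w : Fin n → V, f (PiTensorProduct.tprod K w) = 0 by
    apply LinearMap.ext; intro x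
    simp only [LinearMap.zero_apply]
    induction x using PiTensorProduct.induction_on with
    | smul_tprod r w => rw [map_smul, hw w, smul_zero]
    | add x y hx hy => rw [map_add, hx, hy, add_zero]
  intro w
  set u : Fin n → V := fun k => b (Fin.castLE hn k) with hu
  set a : Fin n → (V →ₗ[K] V) := fun i => (b.coord (Fin.castLE hn i)).smulRight (w i) with ha
  set A : Finset (Fin n) → (V →ₗ[K] V) := fun ε => ∑ i ∈ ε, a i with hA
  have hbad : (({0} : Set K) ∪ ⋃ ε : Finset (Fin n),
      {c : K | ¬ Function.Bijective (LinearMap.id + c • A ε : V →ₗ[K] V)}).Finite :=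
    (Set.finite_singleton 0).union (Set.finite_iUnion fun ε => finite_bad (A ε))
  obtain ⟨c, hc⟩ := hbad.infinite_compl.nonempty
  rw [Set.mem_compl_iff, Set.mem_union, not_or] at hc
  have hc0 : c ≠ 0 := fun h => hc.1 (by simp [h])
  have hbij : ∀ ε : Finset (Fin n),
      Function.Bijective (LinearMap.id + c • A ε : V →ₗ[K] V) := by
    intro ε
    by_contra h
    exact hc.2 (Set.mem_iUnion.mpr ⟨ε, h⟩)
  set g : Finset (Fin n) → (V ≃ₗ[K] V) := fun ε => LinearEquiv.ofBijective _ (hbij ε) with hg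
  have hgl : ∀ ε, (g ε).toLinearMap = LinearMap.id + c • A ε := fun ε => rfl
  have hAu : ∀ (ε : Finset (Fin n)) (k : Fin n), A ε (u k) = if k ∈ ε then w k else 0 := by
    intro ε k
    rw [hA]
    simp only [LinearMap.coe_sum, Finset.sum_apply]
    have hterm : ∀ i ∈ ε, a i (u k) = if i = k then w i else 0 := by
      intro i _
      rw [ha, hu]
      simp only [LinearMap.smulRight_apply, Module.Basis.coord_apply, Module.Basis.repr_self]
      rcases eq_or_ne i k with rfl | hik
      · simp
      · rw [if_neg hik, Finsupp.single_eq_of_ne (fun hh => hik ((Fin.castLE_injective hn) hh)), zero_smul]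
    rw [Finset.sum_congr rfl hterm, Finset.sum_ite_eq' ε k w]
  have hgu : ∀ (ε : Finset (Fin n)) (k : Fin n),
      (g ε).toLinearMap (u k) = u k + (if k ∈ ε then c • w k else 0) := by
    intro ε k
    rw [hgl]
    simp only [LinearMap.add_apply, LinearMap.id_apply, LinearMap.smul_apply, hAu]
    by_cases hk : k ∈ ε <;> simp [hk]
  have hstepB : ∀ ε : Finset (Fin n),
      tpowMap K V n (g ε).toLinearMap (PiTensorProduct.tprod K u)
        = ∑ s : Finset (Fin n), (if s ⊆ ε then
            c ^ s.card • PiTensorProduct.tprod K (s.piecewise w u) else 0) := by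
    intro ε
    rw [tpowMap, PiTensorProduct.map_tprod]
    have h1 : (fun k => (g ε).toLinearMap (u k))
        = ((fun k => if k ∈ ε then c • w k else 0) + u) := by
      funext k; rw [hgu]; exact add_comm _ _
    rw [h1, MultilinearMap.map_add_univ]
    refine Finset.sum_congr rfl fun s _ => ?_
    by_cases hs : s ⊆ ε
    · rw [if_pos hs]
      have h2 : s.piecewise (fun k => if k ∈ ε then c • w k else 0) u
          = s.piecewise (fun k => c • (s.piecewise w u) k) (s.piecewise w u) := by
        funext k
        by_cases hk : k ∈ s
        · simp [Finset.piecewise_eq_of_mem _ _ _ hk, hs hk]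
        · simp [Finset.piecewise_eq_of_notMem _ _ _ hk]
      rw [h2, MultilinearMap.map_piecewise_smul]
      rw [Finset.prod_const]
    · rw [if_neg hs]
      obtain ⟨k, hks, hkε⟩ : ∃ k, k ∈ s ∧ k ∉ ε := by
        by_contra h; push_neg at h; exact hs h
      apply MultilinearMap.map_coord_zero _ k
      simp [Finset.piecewise_eq_of_mem _ _ _ hks, hkε]
  have hstepC : (∑ ε : Finset (Fin n), ((-1 : K)) ^ (n - ε.card) •
        tpowMap K V n (g ε).toLinearMap (PiTensorProduct.tprod K u))
      = c ^ n • PiTensorProduct.tprod K w := by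
    have h3 : ∀ ε : Finset (Fin n), ((-1 : K)) ^ (n - ε.card) •
          tpowMap K V n (g ε).toLinearMap (PiTensorProduct.tprod K u)
        = ∑ s : Finset (Fin n), (if s ⊆ ε then
            (((-1 : K)) ^ (n - ε.card) * c ^ s.card) • PiTensorProduct.tprod K (s.piecewise w u)
          else 0) := by
      intro ε
      rw [hstepB ε, Finset.smul_sum]
      refine Finset.sum_congr rfl fun s _ => ?_
      by_cases hs : s ⊆ ε
      · rw [if_pos hs, if_pos hs, smul_smul]
      · rw [if_neg hs, if_neg hs, smul_zero]
    rw [Finset.sum_congr rfl (fun ε _ => h3 ε), Finset.sum_comm]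
    have h4 : ∀ s : Finset (Fin n),
        (∑ ε : Finset (Fin n), if s ⊆ ε then
            (((-1 : K)) ^ (n - ε.card) * c ^ s.card) • PiTensorProduct.tprod K (s.piecewise w u)
          else 0)
        = (if s = Finset.univ then (1:K) else 0) •
            (c ^ s.card • PiTensorProduct.tprod K (s.piecewise w u)) := by
      intro s
      have h5 : ∀ ε : Finset (Fin n), (if s ⊆ ε then
            (((-1 : K)) ^ (n - ε.card) * c ^ s.card) • PiTensorProduct.tprod K (s.piecewise w u)
          else 0)
          = (if s ⊆ ε then ((-1 : K)) ^ (n - ε.card) else 0) •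
              (c ^ s.card • PiTensorProduct.tprod K (s.piecewise w u)) := by
        intro ε
        by_cases hs : s ⊆ ε
        · rw [if_pos hs, if_pos hs, smul_smul]
        · rw [if_neg hs, if_neg hs, zero_smul]
      rw [Finset.sum_congr rfl (fun ε _ => h5 ε), ← Finset.sum_smul, alt_sum_subset]
    rw [Finset.sum_congr rfl (fun s _ => h4 s),
      Finset.sum_eq_single Finset.univ (fun s _ hs => by rw [if_neg hs, zero_smul])
        (fun h => absurd (Finset.mem_univ _) h),
      if_pos rfl, one_smul]
    congr 1
    · rw [Finset.card_univ, Fintype.card_fin]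
    · congr 1
      funext k
      exact Finset.piecewise_eq_of_mem _ _ _ (Finset.mem_univ k)
  have hfin : c ^ n • f (PiTensorProduct.tprod K w) = 0 := by
    rw [← map_smul, ← hstepC, map_sum]
    have h6 : ∀ ε : Finset (Fin n), f (((-1 : K)) ^ (n - ε.card) •
        tpowMap K V n (g ε).toLinearMap (PiTensorProduct.tprod K u)) = 0 := by
      intro ε
      rw [map_smul]
      have hcomm := DFunLike.congr_fun (hf (g ε)) (PiTensorProduct.tprod K u)
      simp only [LinearMap.comp_apply] at hcomm
      have h0' : f (PiTensorProduct.tprod K u) = 0 := h0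
      rw [show (f : (⨂[K] _ : Fin n, V) → _) (tpowMap K V n (g ε).toLinearMap
          (PiTensorProduct.tprod K u)) = tpowMap K V n (g ε).toLinearMap
          (f (PiTensorProduct.tprod K u)) from hcomm, h0', map_zero, smul_zero]
    rw [Finset.sum_congr rfl (fun ε _ => h6 ε), Finset.sum_const_zero]
  rcases smul_eq_zero.mp hfin with h | h
  · exact absurd h (pow_ne_zero n hc0)
  · exact h

lemma permMap_ee (σ : Equiv.Perm (Fin n)) (J : Fin n → Fin d) :
    permMap K V n σ (ee b J) = ee b fun k => J (σ.symm k) := by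
  simp only [permMap, ee, LinearEquiv.coe_coe, PiTensorProduct.reindex_tprod]

lemma permMap_mem (σ : Equiv.Perm (Fin n)) : permMap K V n σ ∈ glCommutant K V n := by
  intro g
  exact (PiTensorProduct.map_comp_reindex_eq (fun _ : Fin n => g.toLinearMap) σ).symm

end SW

/-- if `dim_K V ≥ n`, the space of endomorphisms of `V^{⊗n}` commuting with
all `g^{⊗n}`, `g ∈ GL(V)`, has dimension `n!`. -/
theorem stmt18 (K : Type*) [Field K] [CharZero K] (V : Type*) [AddCommGroup V] [Module K V]
    [FiniteDimensional K V] (n : ℕ) (hn : n ≤ Module.finrank K V) :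
    Module.finrank K ↥(glCommutant K V n) = n.factorial := by
  classical
  set d := Module.finrank K V with hd
  let b : Module.Basis (Fin d) K V := Module.finBasis K V
  haveI : Module.Finite K (⨂[K] _ : Fin n, V) :=
    ⟨⟨Finset.univ.image (ee (n := n) b), by
      rw [Finset.coe_image, Finset.coe_univ, Set.image_univ, span_ee]⟩⟩
  set e0 : ⨂[K] _ : Fin n, V := ee b (fun k => Fin.castLE hn k) with he0
  set vfam : Equiv.Perm (Fin n) → (⨂[K] _ : Fin n, V) :=
    fun σ => ee b (fun k => Fin.castLE hn (σ k)) with hvfam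
  have hPinj : ∀ σ τ : Equiv.Perm (Fin n),
      (fun k => Fin.castLE hn (σ k)) = (fun k => Fin.castLE hn (τ k)) → σ = τ := by
    intro σ τ h
    ext k
    exact congrArg Fin.val ((Fin.castLE_injective hn) (congrFun h k))
  have hli : LinearIndependent K vfam := by
    rw [Fintype.linearIndependent_iff]
    intro cf hsum σ
    have h1 := congrArg (ff b (fun k => Fin.castLE hn (σ k))) hsum
    rw [map_sum, map_zero] at h1
    have h2 : ∀ τ : Equiv.Perm (Fin n),
        ff b (fun k => Fin.castLE hn (σ k)) (cf τ • vfam τ)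
          = if τ = σ then cf τ else 0 := by
      intro τ
      rw [map_smul, hvfam]
      rw [ff_ee]
      by_cases hτ : τ = σ
      · subst hτ; simp
      · rw [if_neg (fun hh => hτ (hPinj τ σ hh)), if_neg hτ, smul_zero]
    rw [Finset.sum_congr rfl (fun τ _ => h2 τ), Finset.sum_ite_eq' Finset.univ σ cf] at h1
    simpa using h1
  let Φ : ↥(glCommutant K V n) →ₗ[K] (⨂[K] _ : Fin n, V) :=
    { toFun := fun f => (f : Module.End K (⨂[K] _ : Fin n, V)) e0
      map_add' := fun x y => rfl
      map_smul' := fun c x => rfl }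
  have hΦinj : Function.Injective Φ := by
    intro x y hxy
    have h : Φ (x - y) = 0 := by
      show ((x - y : ↥(glCommutant K V n)) : Module.End K (⨂[K] _ : Fin n, V)) e0 = 0
      rw [Submodule.coe_sub, LinearMap.sub_apply]
      exact sub_eq_zero.mpr hxy
    have h2 : (x - y : ↥(glCommutant K V n)) = 0 :=
      Subtype.ext (commutant_eq_zero_of_e0 b hn (x - y).2 h)
    exact sub_eq_zero.mp h2
  have hrange : LinearMap.range Φ = Submodule.span K (Set.range vfam) := by
    apply le_antisymm
    · rintro _ ⟨f, rfl⟩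
      exact commutant_apply_e0_mem_span b hn f.2
    · rw [Submodule.span_le]
      rintro _ ⟨σ, rfl⟩
      refine ⟨⟨permMap K V n σ⁻¹, permMap_mem σ⁻¹⟩, ?_⟩
      show permMap K V n σ⁻¹ e0 = vfam σ
      rw [he0, hvfam, permMap_ee]
      rfl
  have h1 : Module.finrank K ↥(glCommutant K V n)
      = Module.finrank K ↥(LinearMap.range Φ) :=
    (LinearMap.finrank_range_of_inj hΦinj).symm
  rw [h1, hrange, finrank_span_eq_card hli, Fintype.card_perm, Fintype.card_fin]
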